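/- Let {(Zᵢ,Xᵢ)}_{i=1}^n be i.i.d. with joint pmf p_{ZX} on a product of finite alphabets 𝒵 × 𝒳, let ε, ε' > 0 and b₀ > 0, and let Θ ≜ 𝟙{ (Zⁿ,Xⁿ) ∈ 𝒜_{ε,ε'}^{(n)}(Z,X) and Zⁿ ∈ ℬ_{ε,ε'}^{(n)}(Z,X) }. Then for every zⁿ ∈ ℬ_{ε,ε'}^{(n)}(Z,X) with p(zⁿ) > 0, the conditional collision entropy satisfies H_c(Xⁿ | Zⁿ = zⁿ, Θ = 1) ≥ n( H(X|Z) − ε − ε' ) + log₂( 1 − 2^{−n b₀ ε} ), where H(X|Z) ≜ H(Z,X) − H(Z). -/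

import Mathlib

open Finset Real
open scoped Classical BigOperators

/-- Shannon entropy (in bits) of a pmf on a finite alphabet, with the convention `0 log 0 = 0`. -/
noncomputable def shannonEntropy {W : Type*} [Fintype W] (q : W → ℝ) : ℝ :=
  - ∑ w, q w * Real.logb 2 (q w)

/-- Probability of an i.i.d. sequence: `p(wⁿ) = ∏ᵢ p(wᵢ)`. -/
noncomputable def seqProb {W : Type*} (q : W → ℝ) {n : ℕ} (w : Fin n → W) : ℝ :=
  ∏ i, q (w i)

/-- The deviation `f(wⁿ) = |−(1/n) log₂ p(wⁿ) − H(W)|` of the empirical entropy. -/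
noncomputable def fdev {W : Type*} [Fintype W] (q : W → ℝ) {n : ℕ} (w : Fin n → W) : ℝ :=
  |(-(1 / (n : ℝ))) * Real.logb 2 (seqProb q w) - shannonEntropy q|

/-- Chernoff exponent `C_W^{(1)}(ε) = inf_{s>0} ( ln 𝔼[q(W)^{−s/ln 2}] − s(H(W)+ε) )`. -/
noncomputable def chernoff1 {W : Type*} [Fintype W] (q : W → ℝ) (ε : ℝ) : ℝ :=
  sInf ((fun s : ℝ =>
    Real.log (∑ w ∈ Finset.univ.filter (fun w => 0 < q w), q w ^ (1 - s / Real.log 2))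
      - s * (shannonEntropy q + ε)) '' Set.Ioi 0)

/-- Chernoff exponent `C_W^{(2)}(ε) = inf_{s>0} ( ln 𝔼[q(W)^{s/ln 2}] − s(−H(W)+ε) )`. -/
noncomputable def chernoff2 {W : Type*} [Fintype W] (q : W → ℝ) (ε : ℝ) : ℝ :=
  sInf ((fun s : ℝ =>
    Real.log (∑ w ∈ Finset.univ.filter (fun w => 0 < q w), q w ^ (1 + s / Real.log 2))
      - s * (-shannonEntropy q + ε)) '' Set.Ioi 0)

/-- Marginal on the first component of a joint pmf. -/
noncomputable def margFst {X Y : Type*} [Fintype Y] (p : X × Y → ℝ) (x : X) : ℝ :=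
  ∑ y, p (x, y)

/-- Marginal on the second component of a joint pmf. -/
noncomputable def margSnd {X Y : Type*} [Fintype X] (p : X × Y → ℝ) (y : Y) : ℝ :=
  ∑ x, p (x, y)

/-- The sequence of pairs associated to a pair of sequences. -/
def pairSeq {X Y : Type*} {n : ℕ} (w : (Fin n → X) × (Fin n → Y)) : Fin n → X × Y :=
  fun i => (w.1 i, w.2 i)

/-- Joint probability `p(xⁿ,yⁿ) = ∏ᵢ p(xᵢ,yᵢ)` of a pair of i.i.d. sequences. -/
noncomputable def jointSeqProb {X Y : Type*} (p : X × Y → ℝ) {n : ℕ}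
    (w : (Fin n → X) × (Fin n → Y)) : ℝ :=
  ∏ i, p (w.1 i, w.2 i)

/-- The typical set `𝒜_{ε,ε'}^{(n)}(X,Y)`: `f(xⁿ) ≤ ε`, `f(yⁿ) ≤ ε'`, `f(xⁿ,yⁿ) ≤ ε'`. -/
def typical {X Y : Type*} [Fintype X] [Fintype Y] (p : X × Y → ℝ)
    (ε ε' : ℝ) {n : ℕ} (w : (Fin n → X) × (Fin n → Y)) : Prop :=
  fdev (margFst p) w.1 ≤ ε ∧ fdev (margSnd p) w.2 ≤ ε' ∧ fdev p (pairSeq w) ≤ ε'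

/-- Conditional probability `ℙ[ (Xⁿ,Yⁿ) ∉ 𝒜_{ε,ε'}^{(n)}(X,Y) | Xⁿ = xⁿ ]`
(for `xⁿ` with `p(xⁿ) > 0`). -/
noncomputable def condNotTyp {X Y : Type*} [Fintype X] [Fintype Y] (p : X × Y → ℝ)
    (ε ε' : ℝ) {n : ℕ} (xn : Fin n → X) : ℝ :=
  (∑ yn ∈ Finset.univ.filter (fun yn : Fin n → Y => ¬ typical p ε ε' (xn, yn)),
      jointSeqProb p (xn, yn)) / seqProb (margFst p) xn

/-- The event `{Θ = 1} = { (zⁿ,xⁿ) : (zⁿ,xⁿ) ∈ 𝒜_{ε,ε'}^{(n)}(Z,X) and zⁿ ∈ ℬ_{ε,ε'}^{(n)}(Z,X) }`. -/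
def thetaOne {Z X : Type*} [Fintype Z] [Fintype X] (p : Z × X → ℝ) (ε ε' b₀ : ℝ) {n : ℕ}
    (w : (Fin n → Z) × (Fin n → X)) : Prop :=
  typical p ε ε' w ∧ condNotTyp p ε ε' w.1 ≤ (2 : ℝ) ^ (-((n : ℝ) * b₀ * ε))

/-- The conditional distribution `ℙ(Xⁿ = xⁿ | Zⁿ = zⁿ, Θ = 1)`. -/
noncomputable def condDistTheta {Z X : Type*} [Fintype Z] [Fintype X] (p : Z × X → ℝ)
    (ε ε' b₀ : ℝ) {n : ℕ} (zn : Fin n → Z) (xn : Fin n → X) : ℝ :=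
  (if thetaOne p ε ε' b₀ (zn, xn) then jointSeqProb p (zn, xn) else 0) /
    (∑ xn' : Fin n → X, if thetaOne p ε ε' b₀ (zn, xn') then jointSeqProb p (zn, xn') else 0)

/-- For every `zⁿ ∈ ℬ_{ε,ε'}^{(n)}(Z,X)` with `p(zⁿ) > 0`, the conditional
collision entropy satisfies
`H_c(Xⁿ | Zⁿ = zⁿ, Θ = 1) ≥ n( H(X|Z) − ε − ε' ) + log₂( 1 − 2^{−n b₀ ε} )`,
where `H(X|Z) = H(Z,X) − H(Z)`. -/
theorem cond_collision_entropy_lower_bound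
    {Z X : Type*} [Fintype Z] [Fintype X] (p : Z × X → ℝ)
    (hp : ∀ zx, 0 ≤ p zx) (hsum : ∑ zx, p zx = 1)
    (n : ℕ) (ε ε' b₀ : ℝ) (hε : 0 < ε) (hε' : 0 < ε') (hb₀ : 0 < b₀)
    (zn : Fin n → Z)
    (hzn : condNotTyp p ε ε' zn ≤ (2 : ℝ) ^ (-((n : ℝ) * b₀ * ε)))
    (hpzn : 0 < seqProb (margFst p) zn) :
    - Real.logb 2 (∑ xn : Fin n → X, (condDistTheta p ε ε' b₀ zn xn) ^ 2)
      ≥ (n : ℝ) * ((shannonEntropy p - shannonEntropy (margFst p)) - ε - ε')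
        + Real.logb 2 (1 - (2 : ℝ) ^ (-((n : ℝ) * b₀ * ε))) := by
  set HZX := shannonEntropy p with hHZX
  set HZ := shannonEntropy (margFst p) with hHZ
  set D : ℝ := (2 : ℝ) ^ (-((n : ℝ) * b₀ * ε)) with hDdef
  have hD0 : 0 < D := Real.rpow_pos_of_pos two_pos _
  set F : (Fin n → X) → ℝ :=
    fun xn => if thetaOne p ε ε' b₀ (zn, xn) then jointSeqProb p (zn, xn) else 0 with hFdef
  set S : ℝ := ∑ xn, F xn with hSdef
  have hjnn : ∀ xn : Fin n → X, 0 ≤ jointSeqProb p (zn, xn) := fun xn =>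
    Finset.prod_nonneg fun i _ => hp _
  have hFnn : ∀ xn, 0 ≤ F xn := by
    intro xn; simp only [hFdef]; split
    · exact hjnn xn
    · exact le_refl 0
  have hSnn : 0 ≤ S := Finset.sum_nonneg fun xn _ => hFnn xn
  have hcd : ∀ xn, condDistTheta p ε ε' b₀ zn xn = F xn / S := fun xn => rfl
  have hCeq : (∑ xn : Fin n → X, (condDistTheta p ε ε' b₀ zn xn) ^ 2)
      = ∑ xn : Fin n → X, (F xn / S) ^ 2 := by
    exact Finset.sum_congr rfl fun xn _ => by rw [hcd]
  rcases Nat.eq_zero_or_pos n with hn | hn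
  · -- n = 0 case: RHS = logb 2 0 = 0, LHS ≥ 0
    subst hn
    have hD1 : D = 1 := by
      simp [hDdef]
    have hRHS : ((0:ℕ) : ℝ) * ((HZX - HZ) - ε - ε') + Real.logb 2 (1 - D) = 0 := by
      rw [hD1]; simp
    have hle1 : (∑ xn : Fin 0 → X, (F xn / S) ^ 2) ≤ 1 := by
      rcases eq_or_lt_of_le hSnn with hS0 | hS0
      · simp [← hS0]
      · have h1 : ∀ xn : Fin 0 → X, (F xn / S) ^ 2 ≤ F xn / S := by
          intro xn
          have hle : F xn ≤ S := Finset.single_le_sum (fun i _ => hFnn i) (Finset.mem_univ xn)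
          have h01 : 0 ≤ F xn / S := div_nonneg (hFnn xn) hSnn
          have h11 : F xn / S ≤ 1 := (div_le_one hS0).mpr hle
          calc (F xn / S) ^ 2 = (F xn / S) * (F xn / S) := pow_two _
            _ ≤ 1 * (F xn / S) := mul_le_mul_of_nonneg_right h11 h01
            _ = F xn / S := one_mul _
        calc (∑ xn : Fin 0 → X, (F xn / S) ^ 2) ≤ ∑ xn : Fin 0 → X, F xn / S :=
              Finset.sum_le_sum fun xn _ => h1 xn
          _ = S / S := by rw [← Finset.sum_div]
          _ = 1 := div_self (ne_of_gt hS0)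
    have hge0 : (∑ xn : Fin 0 → X, (F xn / S) ^ 2) ≥ 0 :=
      Finset.sum_nonneg fun xn _ => sq_nonneg _
    rw [ge_iff_le, hRHS, hCeq]
    exact neg_nonneg.mpr (Real.logb_nonpos one_lt_two hge0 hle1)
  · -- main case n > 0
    have hnpos : (0 : ℝ) < n := Nat.cast_pos.mpr hn
    have hDlt1 : D < 1 := by
      apply Real.rpow_lt_one_of_one_lt_of_neg one_lt_two
      have : 0 < (n : ℝ) * b₀ * ε := by positivity
      linarith
    have hδ : 0 < 1 - D := by linarith
    -- total probability identity
    have hT : (∑ xn : Fin n → X, jointSeqProb p (zn, xn)) = seqProb (margFst p) zn := by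
      have h := Finset.prod_univ_sum (fun _ : Fin n => (Finset.univ : Finset X))
        (fun i x => p (zn i, x))
      rw [Fintype.piFinset_univ] at h
      simp only [jointSeqProb, seqProb, margFst]
      exact h.symm
    -- bound on non-typical mass
    have hNle : (∑ xn ∈ Finset.univ.filter (fun xn : Fin n → X => ¬ typical p ε ε' (zn, xn)),
        jointSeqProb p (zn, xn)) ≤ D * seqProb (margFst p) zn := by
      have := hzn
      unfold condNotTyp at this
      rw [div_le_iff₀ hpzn] at this
      linarith [this]
    -- S equals the typical mass
    have hSeq : S = ∑ xn ∈ Finset.univ.filter (fun xn : Fin n → X => typical p ε ε' (zn, xn)),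
        jointSeqProb p (zn, xn) := by
      rw [hSdef, ← Finset.sum_filter]
      apply Finset.sum_congr
      · apply Finset.filter_congr
        intro xn _
        simp only [hFdef, thetaOne]
        constructor
        · exact fun h => h.1
        · exact fun h => ⟨h, hzn⟩
      · intro xn _; rfl
    have hSge : seqProb (margFst p) zn * (1 - D) ≤ S := by
      have hsplit := Finset.sum_filter_add_sum_filter_not Finset.univ
        (fun xn : Fin n → X => typical p ε ε' (zn, xn)) (fun xn => jointSeqProb p (zn, xn))
      rw [hT] at hsplit
      rw [hSeq]
      nlinarith [hNle, hsplit]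
    have hSpos : 0 < S := lt_of_lt_of_le (by positivity) hSge
    -- existence of a typical sequence gives fdev bound on zn
    obtain ⟨xn₀, -, hxn₀⟩ := Finset.exists_lt_of_sum_lt (f := fun _ : Fin n → X => (0:ℝ))
      (g := F) (by simpa using hSpos)
    have hθ₀ : thetaOne p ε ε' b₀ (zn, xn₀) := by
      by_contra h
      simp only [hFdef, if_neg h] at hxn₀
      exact lt_irrefl 0 hxn₀
    have hfz : fdev (margFst p) zn ≤ ε := hθ₀.1.1
    -- lower bound on p(zn)
    set m : ℝ := (2 : ℝ) ^ (-((n : ℝ) * (HZ + ε))) with hmdef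
    have hm0 : 0 < m := Real.rpow_pos_of_pos two_pos _
    have hpzge : m ≤ seqProb (margFst p) zn := by
      have habs := (abs_le.mp hfz).2
      -- (-(1/n)) * logb 2 pz - HZ ≤ ε
      have hlog : -((n : ℝ) * (HZ + ε)) ≤ Real.logb 2 (seqProb (margFst p) zn) := by
        have hne : (n : ℝ) ≠ 0 := ne_of_gt hnpos
        have h2 : -(Real.logb 2 (seqProb (margFst p) zn)) / (n : ℝ) ≤ HZ + ε := by
          have : (-(1 / (n : ℝ))) * Real.logb 2 (seqProb (margFst p) zn)
              = -(Real.logb 2 (seqProb (margFst p) zn)) / (n : ℝ) := by ring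
          linarith [habs, this ▸ habs]
        have := (div_le_iff₀ hnpos).mp h2
        linarith [this]
      calc m = (2 : ℝ) ^ (-((n : ℝ) * (HZ + ε))) := hmdef
        _ ≤ (2 : ℝ) ^ (Real.logb 2 (seqProb (margFst p) zn)) :=
            (Real.rpow_le_rpow_left_iff one_lt_two).mpr hlog
        _ = seqProb (margFst p) zn := Real.rpow_logb two_pos (by norm_num) hpzn
    -- upper bound M1 on F
    set M1 : ℝ := (2 : ℝ) ^ (-((n : ℝ) * (HZX - ε'))) with hM1def
    have hM10 : 0 < M1 := Real.rpow_pos_of_pos two_pos _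
    have hFle : ∀ xn, F xn ≤ M1 := by
      intro xn
      simp only [hFdef]
      split
      · rename_i hθ
        have hft : fdev p (pairSeq (zn, xn)) ≤ ε' := hθ.1.2.2
        have hseq : seqProb p (pairSeq (zn, xn)) = jointSeqProb p (zn, xn) := rfl
        rcases eq_or_lt_of_le (hjnn xn) with hj0 | hj0
        · rw [← hj0]; exact le_of_lt hM10
        · have habs := (abs_le.mp hft).1
          rw [hseq] at habs
          have hlog : Real.logb 2 (jointSeqProb p (zn, xn)) ≤ -((n : ℝ) * (HZX - ε')) := by
            have h2 : -ε' ≤ -(Real.logb 2 (jointSeqProb p (zn, xn))) / (n : ℝ) - HZX := by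
              have : (-(1 / (n : ℝ))) * Real.logb 2 (jointSeqProb p (zn, xn))
                  = -(Real.logb 2 (jointSeqProb p (zn, xn))) / (n : ℝ) := by ring
              linarith [this ▸ habs]
            have h3 : (HZX - ε') ≤ -(Real.logb 2 (jointSeqProb p (zn, xn))) / (n : ℝ) := by
              linarith
            have := (le_div_iff₀ hnpos).mp h3
            linarith [this]
          calc jointSeqProb p (zn, xn)
              = (2 : ℝ) ^ (Real.logb 2 (jointSeqProb p (zn, xn))) :=
                (Real.rpow_logb two_pos (by norm_num) hj0).symm
            _ ≤ M1 := (Real.rpow_le_rpow_left_iff one_lt_two).mpr hlog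
      · exact le_of_lt hM10
    -- collision sum bound
    set C : ℝ := ∑ xn : Fin n → X, (F xn / S) ^ 2 with hCdef
    have hCpos : 0 < C := by
      apply Finset.sum_pos' (fun xn _ => sq_nonneg _)
      exact ⟨xn₀, Finset.mem_univ _, pow_pos (div_pos hxn₀ hSpos) 2⟩
    have hCle : C ≤ M1 / S := by
      have h1 : ∀ xn : Fin n → X, (F xn / S) ^ 2 ≤ (M1 / S) * (F xn / S) := by
        intro xn
        have h01 : 0 ≤ F xn / S := div_nonneg (hFnn xn) (le_of_lt hSpos)
        have h11 : F xn / S ≤ M1 / S := (div_le_div_iff_of_pos_right hSpos).mpr (hFle xn)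
        calc (F xn / S) ^ 2 = (F xn / S) * (F xn / S) := pow_two _
          _ ≤ (M1 / S) * (F xn / S) := mul_le_mul_of_nonneg_right h11 h01
      calc C ≤ ∑ xn : Fin n → X, (M1 / S) * (F xn / S) := Finset.sum_le_sum fun xn _ => h1 xn
        _ = (M1 / S) * (S / S) := by rw [← Finset.mul_sum, ← Finset.sum_div]
        _ = M1 / S := by rw [div_self (ne_of_gt hSpos), mul_one]
    have hSge' : m * (1 - D) ≤ S :=
      le_trans (mul_le_mul_of_nonneg_right hpzge (le_of_lt hδ)) hSge
    have hCle2 : C ≤ M1 / (m * (1 - D)) := by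
      calc C ≤ M1 / S := hCle
        _ ≤ M1 / (m * (1 - D)) :=
            (div_le_div_iff_of_pos_left hM10 hSpos (by positivity)).mpr hSge'
    have hlogC : Real.logb 2 C ≤ Real.logb 2 (M1 / (m * (1 - D))) :=
      Real.logb_le_logb_of_le one_lt_two hCpos hCle2
    have hval : Real.logb 2 (M1 / (m * (1 - D)))
        = -((n : ℝ) * (HZX - ε')) - (-((n : ℝ) * (HZ + ε))) - Real.logb 2 (1 - D) := by
      rw [Real.logb_div (ne_of_gt hM10) (by positivity),
        Real.logb_mul (ne_of_gt hm0) (ne_of_gt hδ),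
        hM1def, hmdef, Real.logb_rpow two_pos (by norm_num),
        Real.logb_rpow two_pos (by norm_num)]
      ring
    rw [hCeq]
    rw [hval] at hlogC
    have : Real.logb 2 C
        ≤ -((n : ℝ) * ((HZX - HZ) - ε - ε') + Real.logb 2 (1 - D)) := by
      rw [show -((n : ℝ) * ((HZX - HZ) - ε - ε') + Real.logb 2 (1 - D))
        = -((n : ℝ) * (HZX - ε')) - (-((n : ℝ) * (HZ + ε))) - Real.logb 2 (1 - D) by ring]
      exact hlogC
    linarith [this]
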